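/- Let 𝔛 and 𝔜 be classes of groups, let X ∈ 𝔛 and Y ∈ 𝔜, and let Y* be a subgroup of Y. Then the wreath product X Wr Y* satisfies every law of the class 𝔛 Wr 𝔜 = {X' Wr Y' : X' ∈ 𝔛, Y' ∈ 𝔜}; that is, X Wr Y* ∈ var(𝔛 Wr 𝔜). -/
import Mathlib


/-- The shift automorphism of the base group `B → A` given by `b : B`:
it sends `f` to `fun x => f (x * b)`. -/
def wreathShift {A B : Type*} [Group A] [Group B] (b : B) : (B → A) ≃* (B → A) where
  toFun f := fun x => f (x * b)
  invFun f := fun x => f (x * b⁻¹)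
  left_inv f := by funext x; simp [mul_assoc]
  right_inv f := by funext x; simp [mul_assoc]
  map_mul' f g := rfl

/-- The action of `B` on the base group `B → A` by translation of arguments:
`(b • f) x = f (x * b)`. -/
def wreathAction (A B : Type*) [Group A] [Group B] : B →* MulAut (B → A) where
  toFun := wreathShift
  map_one' := by ext f x; simp [wreathShift]
  map_mul' b₁ b₂ := by ext f x; simp [wreathShift, mul_assoc]

/-- The Cartesian (complete) wreath product `A Wr B = (B → A) ⋊ B`. -/
abbrev Wr (A B : Type*) [Group A] [Group B] : Type _ :=
  (B → A) ⋊[wreathAction A B] B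

/-- `w` is a law of the group `G`: every homomorphic substitution from the free
group of countable rank into `G` sends `w` to `1`. -/
def IsLaw (G : Type*) [Group G] (w : FreeGroup ℕ) : Prop :=
  ∀ φ : FreeGroup ℕ →* G, φ w = 1

universe u u'

section Aux

variable {X : Type*} {Y : Type*} [Group X] [Group Y] (Ystar : Subgroup Y)

/-- The "H-part" of `x` relative to the transversal of coset representatives. -/
noncomputable def wreathSigma (x : Y) : Ystar :=
  ⟨(Quotient.out (QuotientGroup.mk x : Y ⧸ Ystar))⁻¹ * x, by
    have h : (QuotientGroup.mk (Quotient.out (QuotientGroup.mk x : Y ⧸ Ystar)) :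
        Y ⧸ Ystar) = QuotientGroup.mk x := QuotientGroup.out_eq' _
    exact (QuotientGroup.eq).mp h⟩

lemma wreathSigma_mul (x : Y) (h : Ystar) :
    wreathSigma Ystar (x * (h : Y)) = wreathSigma Ystar x * h := by
  have hm : (QuotientGroup.mk (x * (h : Y)) : Y ⧸ Ystar) = QuotientGroup.mk x :=
    QuotientGroup.mk_mul_of_mem x h.2
  ext
  simp [wreathSigma, hm, mul_assoc]

lemma wreathSigma_section (k : Ystar) :
    wreathSigma Ystar ((Quotient.out (QuotientGroup.mk (1 : Y) : Y ⧸ Ystar)) * (k : Y)) = k := by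
  have h1 : (QuotientGroup.mk ((Quotient.out (QuotientGroup.mk (1 : Y) : Y ⧸ Ystar)) * (k : Y)) :
      Y ⧸ Ystar) = QuotientGroup.mk (1 : Y) := by
    rw [QuotientGroup.mk_mul_of_mem _ k.2, QuotientGroup.out_eq']
  ext
  simp [wreathSigma, h1]

/-- The base-group embedding `(Ystar → X) →* (Y → X)`. -/
noncomputable def wreathBaseMap : (Ystar → X) →* (Y → X) where
  toFun f := fun x => f (wreathSigma Ystar x)
  map_one' := rfl
  map_mul' f g := rfl

lemma wreathBaseMap_injective : Function.Injective (wreathBaseMap (X := X) Ystar) := by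
  intro f g hfg
  funext k
  have := congrFun hfg ((Quotient.out (QuotientGroup.mk (1 : Y) : Y ⧸ Ystar)) * (k : Y))
  simpa [wreathBaseMap, wreathSigma_section] using this

/-- The embedding `Wr X Ystar →* Wr X Y`. -/
noncomputable def wreathEmbed : Wr X Ystar →* Wr X Y :=
  SemidirectProduct.map (wreathBaseMap Ystar) Ystar.subtype (by
    intro g
    ext f x
    simp [wreathBaseMap, wreathAction, wreathShift, wreathSigma_mul])

lemma wreathEmbed_injective : Function.Injective (wreathEmbed (X := X) Ystar) := by
  intro p q hpq
  have hl : (wreathEmbed Ystar p).left = (wreathEmbed Ystar q).left := by rw [hpq]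
  have hr : (wreathEmbed Ystar p).right = (wreathEmbed Ystar q).right := by rw [hpq]
  simp only [wreathEmbed, SemidirectProduct.map_left, SemidirectProduct.map_right] at hl hr
  ext1
  · exact wreathBaseMap_injective Ystar hl
  · exact Subtype.ext hr

end Aux

theorem wreath_subgroup_satisfies_laws
    (𝔛 : ∀ (G : Type u) [Group G], Prop) (𝔜 : ∀ (H : Type u') [Group H], Prop)
    (X : Type u) [Group X] (Y : Type u') [Group Y] (hX : 𝔛 X) (hY : 𝔜 Y)
    (Ystar : Subgroup Y)
    (w : FreeGroup ℕ)
    (hw : ∀ (X' : Type u) [Group X'] (Y' : Type u') [Group Y'],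
        𝔛 X' → 𝔜 Y' → IsLaw (Wr X' Y') w) :
    IsLaw (Wr X Ystar) w := by
  intro φ
  apply wreathEmbed_injective Ystar
  rw [map_one]
  exact hw X Y hX hY ((wreathEmbed Ystar).comp φ)
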